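/- Let A and B be d×d Hermitian positive definite matrices. Then for any t ∈ [0,1], det(tA + (1-t)B) ≥ (t·det(A)^{1/d} + (1-t)·det(B)^{1/d})^d. -/

import Mathlib

open Matrix
open scoped ComplexOrder
open Finset

lemma key_scalar {d : ℕ} (hd : 0 < d) (lam : Fin d → ℝ) (hlam : ∀ i, 0 < lam i)
    {t : ℝ} (ht0 : 0 ≤ t) (ht1 : t ≤ 1) :
    (t * (∏ i, lam i) ^ ((1 : ℝ) / d) + (1 - t)) ^ d ≤ ∏ i, (t * lam i + (1 - t)) := by
  have hdR : (0 : ℝ) < (d : ℝ) := by exact_mod_cast hd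
  set f : Fin d → ℝ := fun i => t * lam i + (1 - t) with hf
  have hfpos : ∀ i, 0 < f i := by
    intro i
    rcases eq_or_lt_of_le ht0 with h | h
    · simp [hf, ← h]
    · exact add_pos_of_pos_of_nonneg (mul_pos h (hlam i)) (by linarith)
  have hprodf : 0 < ∏ i, f i := Finset.prod_pos fun i _ => hfpos i
  have hprodlam : 0 < ∏ i, lam i := Finset.prod_pos fun i _ => hlam i
  -- key: t * (∏ lam)^(1/d) + (1-t) ≤ (∏ f)^(1/d)
  have key : t * (∏ i, lam i) ^ ((1 : ℝ) / d) + (1 - t) ≤ (∏ i, f i) ^ ((1 : ℝ) / d) := by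
    have w1 : ∀ i ∈ (univ : Finset (Fin d)), (0:ℝ) ≤ 1 / d := fun _ _ => by positivity
    have wsum : ∑ _i ∈ (univ : Finset (Fin d)), (1:ℝ) / d = 1 := by
      simp [Finset.card_univ]
      field_simp
    have h1 : ∏ i, (t * lam i / f i) ^ ((1:ℝ)/d) ≤ ∑ i, (1:ℝ)/d * (t * lam i / f i) :=
      Real.geom_mean_le_arith_mean_weighted univ _ _ w1 wsum
        (fun i _ => div_nonneg (mul_nonneg ht0 (hlam i).le) (hfpos i).le)
    have h2 : ∏ i, ((1 - t) / f i) ^ ((1:ℝ)/d) ≤ ∑ i, (1:ℝ)/d * ((1 - t) / f i) :=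
      Real.geom_mean_le_arith_mean_weighted univ _ _ w1 wsum
        (fun i _ => div_nonneg (by linarith) (hfpos i).le)
    have hsum : (∑ i, (1:ℝ)/d * (t * lam i / f i)) + (∑ i, (1:ℝ)/d * ((1 - t) / f i)) = 1 := by
      rw [← Finset.sum_add_distrib]
      have : ∀ i : Fin d, (1:ℝ)/d * (t * lam i / f i) + (1:ℝ)/d * ((1 - t) / f i)
          = (1:ℝ)/d := by
        intro i
        rw [← mul_add, ← add_div, div_self (hfpos i).ne']
        ring
      simp only [this]
      simpa using wsum
    -- rewrite products
    have e1 : ∏ i, (t * lam i / f i) ^ ((1:ℝ)/d)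
        = t * (∏ i, lam i) ^ ((1:ℝ)/d) / (∏ i, f i) ^ ((1:ℝ)/d) := by
      rw [Real.finset_prod_rpow _ _ (fun i _ => div_nonneg (mul_nonneg ht0 (hlam i).le) (hfpos i).le)]
      rw [Finset.prod_div_distrib, Finset.prod_mul_distrib, Finset.prod_const,
        Finset.card_univ, Fintype.card_fin]
      rw [Real.div_rpow (by positivity) hprodf.le,
        Real.mul_rpow (pow_nonneg ht0 _) hprodlam.le,
        ← Real.rpow_natCast t d, ← Real.rpow_mul ht0]
      rw [mul_one_div_cancel hdR.ne', Real.rpow_one]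
    have e2 : ∏ i, ((1 - t) / f i) ^ ((1:ℝ)/d)
        = (1 - t) / (∏ i, f i) ^ ((1:ℝ)/d) := by
      rw [Real.finset_prod_rpow _ _ (fun i _ => div_nonneg (by linarith) (hfpos i).le)]
      rw [Finset.prod_div_distrib, Finset.prod_const,
        Finset.card_univ, Fintype.card_fin]
      rw [Real.div_rpow (pow_nonneg (by linarith) _) hprodf.le,
        ← Real.rpow_natCast (1-t) d, ← Real.rpow_mul (by linarith)]
      rw [mul_one_div_cancel hdR.ne', Real.rpow_one]
    rw [e1] at h1
    rw [e2] at h2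
    have hP : (0:ℝ) < (∏ i, f i) ^ ((1:ℝ)/d) := Real.rpow_pos_of_pos hprodf _
    have := add_le_add h1 h2
    rw [hsum, ← add_div, div_le_one hP] at this
    exact this
  calc (t * (∏ i, lam i) ^ ((1 : ℝ) / d) + (1 - t)) ^ d
      ≤ ((∏ i, f i) ^ ((1:ℝ)/d)) ^ d := by
        apply pow_le_pow_left₀ _ key
        have : (0:ℝ) ≤ (∏ i, lam i) ^ ((1:ℝ)/d) := Real.rpow_nonneg hprodlam.le _
        nlinarith
    _ = ∏ i, f i := by
        rw [← Real.rpow_natCast _ d, ← Real.rpow_mul hprodf.le,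
          one_div_mul_cancel hdR.ne', Real.rpow_one]

theorem stmt_1 {d : ℕ} (A B : Matrix (Fin d) (Fin d) ℂ)
    (hA : A.PosDef) (hB : B.PosDef) (t : ℝ) (ht : t ∈ Set.Icc (0 : ℝ) 1) :
    (t * (A.det.re) ^ ((1 : ℝ) / d) + (1 - t) * (B.det.re) ^ ((1 : ℝ) / d)) ^ (d : ℕ) ≤
      ((t : ℂ) • A + ((1 : ℂ) - t) • B).det.re := by
  obtain ⟨ht0, ht1⟩ := ht
  rcases Nat.eq_zero_or_pos d with hd | hd
  · subst hd
    simp [Matrix.det_isEmpty]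
  classical
  open scoped MatrixOrder in set S := CFC.sqrt B with hSdef
  open scoped MatrixOrder in have hS : S.PosSemidef := (CFC.sqrt_nonneg B).posSemidef
  have hSH : S.IsHermitian := hS.1
  open scoped MatrixOrder in have hSS : S * S = B := CFC.sqrt_mul_sqrt_self B hB.posSemidef.nonneg
  have hdetS2 : S.det * S.det = B.det := by rw [← Matrix.det_mul, hSS]
  have hdetB : B.det ≠ 0 := hB.det_pos.ne'
  have hSu : IsUnit S.det := by
    refine isUnit_iff_ne_zero.mpr fun h => hdetB ?_
    rw [← hdetS2, h, mul_zero]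
  have hSinvH : (S⁻¹).IsHermitian := hSH.inv
  set C := S⁻¹ * A * S⁻¹ with hCdef
  have hC : C.PosDef := by
    rw [posDef_iff_dotProduct_mulVec]
    constructor
    · have := isHermitian_conjTranspose_mul_mul S⁻¹ hA.1
      rwa [hSinvH.eq] at this
    · intro x hx
      have hx' : S⁻¹ *ᵥ x ≠ 0 := by
        intro h
        apply hx
        have h2 : (S * S⁻¹) *ᵥ x = 0 := by
          rw [← Matrix.mulVec_mulVec, h, Matrix.mulVec_zero]
        rwa [Matrix.mul_nonsing_inv _ hSu, Matrix.one_mulVec] at h2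
      have key : star x ⬝ᵥ C *ᵥ x = star (S⁻¹ *ᵥ x) ⬝ᵥ A *ᵥ (S⁻¹ *ᵥ x) := by
        rw [star_mulVec, hSinvH.eq, hCdef, ← Matrix.mulVec_mulVec, ← Matrix.mulVec_mulVec,
          Matrix.dotProduct_mulVec]
      rw [key]
      exact hA.dotProduct_mulVec_pos hx'
  set lam := hC.1.eigenvalues with hlamdef
  have hlampos : ∀ i, 0 < lam i := hC.eigenvalues_pos
  set U : Matrix (Fin d) (Fin d) ℂ := (hC.1.eigenvectorUnitary : Matrix (Fin d) (Fin d) ℂ) with hUdef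
  have hCspec : C = U * diagonal (RCLike.ofReal ∘ lam) * star U := hC.1.spectral_theorem
  have hU1 : U * star U = 1 := Matrix.mem_unitaryGroup_iff.mp (hC.1.eigenvectorUnitary).2
  set g : Fin d → ℂ := fun i => ((t * lam i + (1 - t) : ℝ) : ℂ) with hgdef
  have hD : U * diagonal g * star U = (t : ℂ) • C + ((1 : ℂ) - t) • 1 := by
    have hg : diagonal g = (t : ℂ) • diagonal (RCLike.ofReal ∘ lam) + ((1 : ℂ) - t) • 1 := by
      ext i j
      rcases eq_or_ne i j with rfl | h
      · simp only [Matrix.add_apply, Matrix.smul_apply, diagonal_apply_eq,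
          Matrix.one_apply_eq, Function.comp_apply, smul_eq_mul, hgdef, RCLike.ofReal_real_eq_id,
          id_eq]
        simp only [← RCLike.algebraMap_eq_ofReal, Complex.coe_algebraMap]
        push_cast
        ring
      · simp [Matrix.add_apply, Matrix.smul_apply, diagonal_apply_ne _ h, Matrix.one_apply_ne h]
    rw [hg, Matrix.mul_add, Matrix.add_mul, Matrix.mul_smul, Matrix.smul_mul, Matrix.mul_smul,
      Matrix.smul_mul, Matrix.mul_one, hU1, ← hCspec]
  have hSCS : S * C * S = A := by
    have h1 : S * S⁻¹ = 1 := Matrix.mul_nonsing_inv _ hSu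
    have h2 : S⁻¹ * S = 1 := Matrix.nonsing_inv_mul _ hSu
    rw [hCdef]
    simp only [Matrix.mul_assoc]
    rw [h2, Matrix.mul_one, ← Matrix.mul_assoc, h1, Matrix.one_mul]
  have hSA : S * ((t : ℂ) • C + ((1 : ℂ) - t) • 1) * S = (t : ℂ) • A + ((1 : ℂ) - t) • B := by
    rw [Matrix.mul_add, Matrix.add_mul, Matrix.mul_smul, Matrix.smul_mul, hSCS,
      Matrix.mul_smul, Matrix.smul_mul, Matrix.mul_one, hSS]
  have hUdet : U.det * (star U).det = 1 := by rw [← Matrix.det_mul, hU1, Matrix.det_one]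
  have hdetM : ((t : ℂ) • A + ((1 : ℂ) - t) • B).det = B.det * ∏ i, g i := by
    rw [← hSA, ← hD, Matrix.det_mul, Matrix.det_mul, Matrix.det_mul, Matrix.det_mul,
      Matrix.det_diagonal]
    rw [show S.det * (U.det * (∏ i, g i) * (star U).det) * S.det
        = (S.det * S.det) * ((U.det * (star U).det) * ∏ i, g i) from by ring, hdetS2, hUdet,
      one_mul]
  set mu := hB.1.eigenvalues with hmudef
  have hmupos : ∀ i, 0 < mu i := hB.eigenvalues_pos
  have hdetBval : B.det = ((∏ i, mu i : ℝ) : ℂ) := by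
    rw [hB.1.det_eq_prod_eigenvalues]
    push_cast
    rfl
  have hdetCval : C.det = ((∏ i, lam i : ℝ) : ℂ) := by
    rw [hC.1.det_eq_prod_eigenvalues]
    push_cast
    rfl
  have hdetAval : A.det = ((∏ i, mu i : ℝ) : ℂ) * ((∏ i, lam i : ℝ) : ℂ) := by
    rw [← hSCS, Matrix.det_mul, Matrix.det_mul]
    rw [hdetCval]
    calc S.det * ((∏ i, lam i : ℝ) : ℂ) * S.det
        = (S.det * S.det) * ((∏ i, lam i : ℝ) : ℂ) := by ring
      _ = _ := by rw [hdetS2, hdetBval]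
  -- move to the reals
  have hgprod : ∏ i, g i = ((∏ i, (t * lam i + (1 - t)) : ℝ) : ℂ) := by
    simp [hgdef]
  have hre : ((t : ℂ) • A + ((1 : ℂ) - t) • B).det.re
      = (∏ i, mu i) * ∏ i, (t * lam i + (1 - t)) := by
    rw [hdetM, hdetBval, hgprod, ← Complex.ofReal_mul, Complex.ofReal_re]
  have hAre : A.det.re = (∏ i, mu i) * (∏ i, lam i) := by
    rw [hdetAval, ← Complex.ofReal_mul, Complex.ofReal_re]
  have hBre : B.det.re = ∏ i, mu i := by
    rw [hdetBval, Complex.ofReal_re]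
  rw [hre, hAre, hBre]
  set Pm := ∏ i, mu i with hPm
  set Pl := ∏ i, lam i with hPl
  have hPmpos : 0 < Pm := Finset.prod_pos fun i _ => hmupos i
  have hPlpos : 0 < Pl := Finset.prod_pos fun i _ => hlampos i
  have hdR : (0 : ℝ) < (d : ℝ) := by exact_mod_cast hd
  have lhs_eq : t * (Pm * Pl) ^ ((1 : ℝ) / d) + (1 - t) * Pm ^ ((1 : ℝ) / d)
      = Pm ^ ((1 : ℝ) / d) * (t * Pl ^ ((1 : ℝ) / d) + (1 - t)) := by
    rw [Real.mul_rpow hPmpos.le hPlpos.le]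
    ring
  rw [lhs_eq, mul_pow, ← Real.rpow_natCast (Pm ^ ((1:ℝ)/d)) d, ← Real.rpow_mul hPmpos.le,
    one_div_mul_cancel hdR.ne', Real.rpow_one]
  exact mul_le_mul_of_nonneg_left (key_scalar hd lam hlampos ht0 ht1) hPmpos.le
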